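/- If μ = λ² ≠ 0 is an M-eigenvalue of the contracted biquadratic tensor T^{(3)} with M-eigenvectors x and y, then λ is a singular value of A with singular vectors x, y, and z, where z_k = (1/λ) ∑_{i,j} a_{ijk} x_i y_j; in particular, z is a unit vector. -/

import Mathlib

noncomputable section

/-- `lam` is a singular value of the third order tensor `A` with singular vectors `x, y, z`. -/
def IsSingularValue {d1 d2 d3 : ℕ} (A : Fin d1 → Fin d2 → Fin d3 → ℝ)
    (lam : ℝ) (x : Fin d1 → ℝ) (y : Fin d2 → ℝ) (z : Fin d3 → ℝ) : Prop :=
  (∀ i, ∑ j, ∑ k, A i j k * y j * z k = lam * x i) ∧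
  (∀ j, ∑ i, ∑ k, A i j k * x i * z k = lam * y j) ∧
  (∀ k, ∑ i, ∑ j, A i j k * x i * y j = lam * z k) ∧
  (∑ i, x i ^ 2 = 1) ∧ (∑ j, y j ^ 2 = 1) ∧ (∑ k, z k ^ 2 = 1)

/-- A fourth order tensor `T` of size `d1 × d2 × d1 × d2` is biquadratic. -/
def Biquadratic {d1 d2 : ℕ} (T : Fin d1 → Fin d2 → Fin d1 → Fin d2 → ℝ) : Prop :=
  ∀ i j p q, T i j p q = T p j i q ∧ T i j p q = T p q i j

/-- `⟨T, x ⊗ y ⊗ x ⊗ y⟩`. -/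
def bform {d1 d2 : ℕ} (T : Fin d1 → Fin d2 → Fin d1 → Fin d2 → ℝ)
    (x : Fin d1 → ℝ) (y : Fin d2 → ℝ) : ℝ :=
  ∑ i, ∑ j, ∑ p, ∑ q, T i j p q * x i * y j * x p * y q

/-- `mu` is an M-eigenvalue of `T` with M-eigenvectors `x, y`. -/
def IsMEigen {d1 d2 : ℕ} (T : Fin d1 → Fin d2 → Fin d1 → Fin d2 → ℝ)
    (mu : ℝ) (x : Fin d1 → ℝ) (y : Fin d2 → ℝ) : Prop :=
  (∀ i, ∑ j, ∑ p, ∑ q, T i j p q * y j * x p * y q = mu * x i) ∧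
  (∀ j, ∑ i, ∑ p, ∑ q, T i j p q * x i * x p * y q = mu * y j) ∧
  (∑ i, x i ^ 2 = 1) ∧ (∑ j, y j ^ 2 = 1)

/-- Contraction of `A` with itself on the third index. -/
def T3 {d1 d2 d3 : ℕ} (A : Fin d1 → Fin d2 → Fin d3 → ℝ) :
    Fin d1 → Fin d2 → Fin d1 → Fin d2 → ℝ :=
  fun i j p q => ∑ k, A i j k * A p q k

theorem stmt9 {d1 d2 d3 : ℕ} (A : Fin d1 → Fin d2 → Fin d3 → ℝ)
    (lam : ℝ) (hlam : lam ≠ 0) (x : Fin d1 → ℝ) (y : Fin d2 → ℝ)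
    (h : IsMEigen (T3 A) (lam ^ 2) x y) :
    IsSingularValue A lam x y (fun k => (1 / lam) * ∑ i, ∑ j, A i j k * x i * y j) := by
  obtain ⟨h1, h2, hx, hy⟩ := h
  set S : Fin d3 → ℝ := fun k => ∑ i, ∑ j, A i j k * x i * y j with hS
  have key1 : ∀ i, ∑ j, ∑ k, A i j k * y j * S k = lam ^ 2 * x i := by
    intro i
    rw [← h1 i]
    simp only [T3, hS, Finset.mul_sum, Finset.sum_mul]
    apply Finset.sum_congr rfl; intro j _
    rw [Finset.sum_comm]
    apply Finset.sum_congr rfl; intro p _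
    rw [Finset.sum_comm]
    apply Finset.sum_congr rfl; intro q _
    apply Finset.sum_congr rfl; intro k _
    ring
  have key2 : ∀ j, ∑ i, ∑ k, A i j k * x i * S k = lam ^ 2 * y j := by
    intro j
    rw [← h2 j]
    simp only [T3, hS, Finset.mul_sum, Finset.sum_mul]
    apply Finset.sum_congr rfl; intro i _
    rw [Finset.sum_comm]
    apply Finset.sum_congr rfl; intro p _
    rw [Finset.sum_comm]
    apply Finset.sum_congr rfl; intro q _
    apply Finset.sum_congr rfl; intro k _
    ring
  have hS2 : ∑ k, S k ^ 2 = lam ^ 2 := by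
    have e : ∑ k, S k ^ 2 = ∑ i, x i * (∑ j, ∑ k, A i j k * y j * S k) := by
      simp only [hS, pow_two, Finset.sum_mul, Finset.mul_sum]
      rw [Finset.sum_comm]
      apply Finset.sum_congr rfl; intro i _
      rw [Finset.sum_comm]
      apply Finset.sum_congr rfl; intro j _
      apply Finset.sum_congr rfl; intro k _
      apply Finset.sum_congr rfl; intro p _
      apply Finset.sum_congr rfl; intro q _
      ring
    rw [e]
    have : ∀ i, x i * (∑ j, ∑ k, A i j k * y j * S k) = lam ^ 2 * x i ^ 2 := by
      intro i; rw [key1 i]; ring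
    simp only [this, ← Finset.mul_sum, hx, mul_one]
  refine ⟨?_, ?_, ?_, hx, hy, ?_⟩
  · intro i
    have : ∑ j, ∑ k, A i j k * y j * ((1 / lam) * S k)
        = (1 / lam) * ∑ j, ∑ k, A i j k * y j * S k := by
      rw [Finset.mul_sum]
      apply Finset.sum_congr rfl; intro j _
      rw [Finset.mul_sum]
      apply Finset.sum_congr rfl; intro k _
      ring
    simp only [hS] at this ⊢
    rw [this, key1 i]
    field_simp
  · intro j
    have : ∑ i, ∑ k, A i j k * x i * ((1 / lam) * S k)
        = (1 / lam) * ∑ i, ∑ k, A i j k * x i * S k := by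
      rw [Finset.mul_sum]
      apply Finset.sum_congr rfl; intro i _
      rw [Finset.mul_sum]
      apply Finset.sum_congr rfl; intro k _
      ring
    simp only [hS] at this ⊢
    rw [this, key2 j]
    field_simp
  · intro k
    show S k = lam * ((1 / lam) * S k)
    field_simp
  · show ∑ k, ((1 / lam) * S k) ^ 2 = 1
    have : ∀ k, ((1 / lam) * S k) ^ 2 = (1 / lam ^ 2) * S k ^ 2 := by
      intro k; ring
    simp only [this, ← Finset.mul_sum, hS2]
    field_simp
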